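/- Let n, k be positive integers. For β₂ ∈ (0, 1/k), every root τ ≠ 1 of the polynomial -((n/k+β₂)/(n+1))τ^n + ((1/k-β₂)/(n+1))(τ^{n-1}+⋯+τ+1) tends to 0 as β₂ ↗ 1/k; more precisely, every such root α satisfies |α| = O((k/(n+1))^{1/n}(1/k-β₂)^{1/n}). -/

import Mathlib

open Finset

/-- Every root `α ≠ 1` of
`-((n/k+β₂)/(n+1))τ^n + ((1/k-β₂)/(n+1))(τ^{n-1}+⋯+τ+1)` satisfies
`|α| ≤ C (k/(n+1))^{1/n} (1/k-β₂)^{1/n}` for a constant `C` independent of `β₂ ∈ (0,1/k)`;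
in particular all such roots tend to `0` as `β₂ ↗ 1/k`. -/
theorem stmt7 (n k : ℕ) (hn : 1 ≤ n) (hk : 1 ≤ k) :
    ∃ C > 0, ∀ β₂ ∈ Set.Ioo (0 : ℝ) (1 / (k : ℝ)), ∀ α : ℂ, α ≠ 1 →
      (-((((n : ℂ) / k + (β₂ : ℂ)) / (n + 1)) * α ^ n)
        + ((1 / (k : ℂ) - (β₂ : ℂ)) / (n + 1)) * (∑ j ∈ Finset.range n, α ^ j) = 0) →
      ‖α‖ ≤
        C * ((k : ℝ) / (n + 1)) ^ ((1 : ℝ) / n) * (1 / (k : ℝ) - β₂) ^ ((1 : ℝ) / n) := by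
  refine ⟨(n : ℝ) + 1, by positivity, ?_⟩
  rintro β₂ ⟨hb0, hb1⟩ α _ heq
  set r := ‖α‖ with hrdef
  have hr0 : 0 ≤ r := norm_nonneg α
  have hk0 : (0:ℝ) < k := by exact_mod_cast hk
  have hn0 : (0:ℝ) < n := by exact_mod_cast hn
  have hn1 : (0:ℝ) < (n:ℝ) + 1 := by positivity
  have hε : (0:ℝ) < 1 / k - β₂ := by linarith
  have hA0 : (0:ℝ) < ((n:ℝ)/k + β₂)/(n+1) := by positivity
  have hB0 : (0:ℝ) ≤ (1/(k:ℝ) - β₂)/(n+1) := by positivity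
  have heq' : ((((n:ℝ)/k + β₂)/(n+1) : ℝ) : ℂ) * α ^ n
      = ((((1/(k:ℝ) - β₂)/(n+1)) : ℝ) : ℂ) * (∑ j ∈ Finset.range n, α ^ j) := by
    push_cast
    linear_combination -heq
  have habs : (((n:ℝ)/k + β₂)/(n+1)) * r ^ n
      = ((1/(k:ℝ) - β₂)/(n+1)) * ‖∑ j ∈ Finset.range n, α ^ j‖ := by
    have h := congrArg norm heq'
    rw [norm_mul, norm_mul, norm_pow, Complex.norm_real, Complex.norm_real, Real.norm_eq_abs, Real.norm_eq_abs,
      abs_of_pos hA0, abs_of_nonneg hB0] at h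
    exact h
  have hsum : ‖∑ j ∈ Finset.range n, α ^ j‖ ≤ ∑ j ∈ Finset.range n, r ^ j := by
    calc ‖∑ j ∈ Finset.range n, α ^ j‖
        ≤ ∑ j ∈ Finset.range n, ‖α ^ j‖ := norm_sum_le _ _
      _ = ∑ j ∈ Finset.range n, r ^ j := by simp [norm_pow, hrdef]
  have hkey : (((n:ℝ)/k + β₂)/(n+1)) * r ^ n
      ≤ ((1/(k:ℝ) - β₂)/(n+1)) * ∑ j ∈ Finset.range n, r ^ j := by
    rw [habs]
    exact mul_le_mul_of_nonneg_left hsum hB0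
  -- clear the common denominator (n+1)
  have hkey2 : ((n:ℝ)/k + β₂) * r ^ n ≤ (1/(k:ℝ) - β₂) * ∑ j ∈ Finset.range n, r ^ j := by
    have h := mul_le_mul_of_nonneg_right hkey hn1.le
    have e1 : (((n:ℝ)/k + β₂)/(n+1)) * r ^ n * ((n:ℝ)+1) = ((n:ℝ)/k + β₂) * r ^ n := by
      field_simp
    have e2 : ((1/(k:ℝ) - β₂)/(n+1)) * (∑ j ∈ Finset.range n, r ^ j) * ((n:ℝ)+1)
        = (1/(k:ℝ) - β₂) * ∑ j ∈ Finset.range n, r ^ j := by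
      field_simp
    rwa [e1, e2] at h
  have hkε : (k:ℝ) * (1/(k:ℝ) - β₂) < 1 := by
    rw [mul_sub, mul_one_div, div_self hk0.ne']
    nlinarith [mul_pos hk0 hb0]
  -- show r^n ≤ k * (1/k - β₂)
  have hrn : r ^ n ≤ (k:ℝ) * (1/(k:ℝ) - β₂) := by
    by_cases hr1 : r ≤ 1
    · have hle : ∑ j ∈ Finset.range n, r ^ j ≤ (n:ℝ) := by
        calc ∑ j ∈ Finset.range n, r ^ j ≤ ∑ j ∈ Finset.range n, (1:ℝ) :=
              Finset.sum_le_sum (fun j _ => pow_le_one₀ hr0 hr1)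
          _ = n := by simp
      have h1 : ((n:ℝ)/k) * r ^ n ≤ (1/(k:ℝ) - β₂) * n := by
        calc ((n:ℝ)/k) * r ^ n ≤ ((n:ℝ)/k + β₂) * r ^ n := by
              apply mul_le_mul_of_nonneg_right _ (by positivity)
              linarith
          _ ≤ (1/(k:ℝ) - β₂) * ∑ j ∈ Finset.range n, r ^ j := hkey2
          _ ≤ (1/(k:ℝ) - β₂) * n := mul_le_mul_of_nonneg_left hle hε.le
      rw [div_mul_eq_mul_div, div_le_iff₀ hk0] at h1
      nlinarith
    · exfalso
      push_neg at hr1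
      have hr1' : (1:ℝ) ≤ r := le_of_lt hr1
      have hle : ∑ j ∈ Finset.range n, r ^ j ≤ (n:ℝ) * r ^ (n-1) := by
        calc ∑ j ∈ Finset.range n, r ^ j ≤ ∑ j ∈ Finset.range n, r ^ (n-1) :=
              Finset.sum_le_sum (fun j hj => pow_le_pow_right₀ hr1'
                (Nat.le_sub_one_of_lt (Finset.mem_range.mp hj)))
          _ = n * r ^ (n-1) := by simp [mul_comm]
      have h1 : ((n:ℝ)/k) * r ^ n ≤ (1/(k:ℝ) - β₂) * ((n:ℝ) * r ^ (n-1)) := by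
        calc ((n:ℝ)/k) * r ^ n ≤ ((n:ℝ)/k + β₂) * r ^ n := by
              apply mul_le_mul_of_nonneg_right _ (by positivity)
              linarith
          _ ≤ (1/(k:ℝ) - β₂) * ∑ j ∈ Finset.range n, r ^ j := hkey2
          _ ≤ (1/(k:ℝ) - β₂) * ((n:ℝ) * r ^ (n-1)) :=
              mul_le_mul_of_nonneg_left hle hε.le
      have hpow : r ^ n = r * r ^ (n-1) := by
        conv_lhs => rw [show n = (n-1) + 1 from (Nat.succ_pred_eq_of_pos hn).symm]
        ring
      have hrpos : (0:ℝ) < r ^ (n-1) := pow_pos (lt_of_lt_of_le one_pos hr1') _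
      rw [hpow, div_mul_eq_mul_div, div_le_iff₀ hk0] at h1
      -- h1 : n * (r * r^(n-1)) ≤ (1/k - β₂) * (n * r^(n-1)) * k
      have h3 : r ≤ (k:ℝ) * (1/(k:ℝ) - β₂) := by
        nlinarith [mul_pos hn0 hrpos]
      linarith
  -- conclude via rpow
  have hrn' : r ≤ ((k:ℝ) * (1/(k:ℝ) - β₂)) ^ ((1:ℝ)/n) := by
    have h1 : (r ^ n : ℝ) ^ ((1:ℝ)/n) ≤ ((k:ℝ) * (1/(k:ℝ) - β₂)) ^ ((1:ℝ)/n) :=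
      Real.rpow_le_rpow (by positivity) hrn (by positivity)
    calc r = (r ^ n : ℝ) ^ ((1:ℝ)/n) := by
            rw [← Real.rpow_natCast r n, ← Real.rpow_mul hr0]
            rw [mul_one_div, div_self (ne_of_gt hn0), Real.rpow_one]
      _ ≤ _ := h1
  have hsplit : ((k:ℝ) * (1/(k:ℝ) - β₂)) ^ ((1:ℝ)/n)
      = (k:ℝ) ^ ((1:ℝ)/n) * (1/(k:ℝ) - β₂) ^ ((1:ℝ)/n) :=
    Real.mul_rpow hk0.le hε.le
  have h5 : ((n:ℝ)+1) ^ ((1:ℝ)/n) ≤ (n:ℝ) + 1 := by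
    have := Real.rpow_le_rpow_of_exponent_le (by linarith : (1:ℝ) ≤ (n:ℝ)+1)
      (by rw [div_le_one hn0]; exact_mod_cast hn : (1:ℝ)/n ≤ 1)
    rwa [Real.rpow_one] at this
  have hk' : (k:ℝ) = ((n:ℝ)+1) * ((k:ℝ)/(n+1)) := by
    field_simp
  have hkform : (k:ℝ) ^ ((1:ℝ)/n)
      ≤ ((n:ℝ) + 1) * ((k:ℝ)/(n+1)) ^ ((1:ℝ)/n) := by
    calc (k:ℝ) ^ ((1:ℝ)/n) = (((n:ℝ)+1) * ((k:ℝ)/(n+1))) ^ ((1:ℝ)/n) := by rw [← hk']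
      _ = ((n:ℝ)+1) ^ ((1:ℝ)/n) * ((k:ℝ)/(n+1)) ^ ((1:ℝ)/n) :=
          Real.mul_rpow hn1.le (by positivity)
      _ ≤ ((n:ℝ)+1) * ((k:ℝ)/(n+1)) ^ ((1:ℝ)/n) :=
          mul_le_mul_of_nonneg_right h5 (Real.rpow_nonneg (by positivity) _)
  calc r ≤ ((k:ℝ) * (1/(k:ℝ) - β₂)) ^ ((1:ℝ)/n) := hrn'
    _ = (k:ℝ) ^ ((1:ℝ)/n) * (1/(k:ℝ) - β₂) ^ ((1:ℝ)/n) := hsplit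
    _ ≤ (((n:ℝ)+1) * ((k:ℝ)/(n+1)) ^ ((1:ℝ)/n)) * (1/(k:ℝ) - β₂) ^ ((1:ℝ)/n) :=
        mul_le_mul_of_nonneg_right hkform (Real.rpow_nonneg hε.le _)
    _ = ((n:ℝ)+1) * ((k:ℝ)/(n+1)) ^ ((1:ℝ)/n) * (1/(k:ℝ) - β₂) ^ ((1:ℝ)/n) := by ring
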